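/- Let {x_k} be generated by the TRFD algorithm, assume f is bounded below by f_low, and suppose T ≥ 1 satisfies ψ_{p,Δ_*}(x_k) > ε for k = 0,...,T−1 (equivalently, T ≤ T_g(ε), the first index where ψ_{p,Δ_*}(x_k) ≤ ε). Then the number of successful iterations among {0,...,T−1} satisfies |S ∩ {0,...,T−1}| ≤ 8 L_{h,p} max{σ, L_J} c_{p,2}(m) c_{2,p}(n)² (f(x_0) − f_low) / (α(1−α)θ²) · ε^{−2}. -/

import Mathlib

open scoped ENNReal
set_option maxHeartbeats 2000000

noncomputable section

/-- The `p`-norm on `ℝ^n`, for `p ∈ [1,∞]`. -/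
def pNorm (p : ℝ≥0∞) {n : ℕ} (x : Fin n → ℝ) : ℝ :=
  if p = ∞ then ⨆ i, |x i| else (∑ i, |x i| ^ p.toReal) ^ (1 / p.toReal)

/-- The Euclidean norm on `ℝ^n`. -/
def eucNorm {n : ℕ} (x : Fin n → ℝ) : ℝ := Real.sqrt (∑ i, x i ^ 2)

/-- The operator norm of a matrix, induced by Euclidean norms. -/
def opNorm2 {m n : ℕ} (A : Matrix (Fin m) (Fin n) ℝ) : ℝ :=
  sSup ((fun v => eucNorm (A.mulVec v)) '' {v | eucNorm v ≤ 1})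

/-- Forward finite-difference approximation of the Jacobian of `F` at `x` with stepsize `τ`:
the `j`-th column is `(F (x + τ e_j) - F x) / τ`. -/
def fdMatrix {n m : ℕ} (F : (Fin n → ℝ) → (Fin m → ℝ)) (x : Fin n → ℝ) (τ : ℝ) :
    Matrix (Fin m) (Fin n) ℝ :=
  Matrix.of fun i j => (F (x + Pi.single j τ) i - F x i) / τ

/-- Stationarity measure `ψ_{p,r}(x)`. -/
def psi {n m : ℕ} (Ω : Set (Fin n → ℝ)) (F : (Fin n → ℝ) → (Fin m → ℝ))
    (h : (Fin m → ℝ) → ℝ) (J : (Fin n → ℝ) → Matrix (Fin m) (Fin n) ℝ)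
    (p : ℝ≥0∞) (r : ℝ) (x : Fin n → ℝ) : ℝ :=
  r⁻¹ * (h (F x) -
    sInf ((fun s => h (F x + (J x).mulVec s)) '' {s | x + s ∈ Ω ∧ pNorm p s ≤ r}))

/-- Approximate stationarity measure `η_{p,r}(x; A)`. -/
def eta {n m : ℕ} (Ω : Set (Fin n → ℝ)) (F : (Fin n → ℝ) → (Fin m → ℝ))
    (h : (Fin m → ℝ) → ℝ) (p : ℝ≥0∞) (r : ℝ) (x : Fin n → ℝ)
    (A : Matrix (Fin m) (Fin n) ℝ) : ℝ :=
  r⁻¹ * (h (F x) -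
    sInf ((fun s => h (F x + A.mulVec s)) '' {s | x + s ∈ Ω ∧ pNorm p s ≤ r}))

/-- The TRFD algorithm: `x`, `τ`, `Δ`, `A`, `d`, `ρ` are the iterates, finite-difference
stepsizes, trust-region radii, finite-difference Jacobian approximations, trial steps and
ratios generated by TRFD with parameters `ε, σ, α, θ, Δstar` from the point `x 0`. -/
def TRFDrun {n m : ℕ} (Ω : Set (Fin n → ℝ)) (F : (Fin n → ℝ) → (Fin m → ℝ))
    (h : (Fin m → ℝ) → ℝ) (p : ℝ≥0∞)
    (Lh cpm cnp ε σ α θ Δstar : ℝ)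
    (x : ℕ → Fin n → ℝ) (τ Δ : ℕ → ℝ) (A : ℕ → Matrix (Fin m) (Fin n) ℝ)
    (d : ℕ → Fin n → ℝ) (ρ : ℕ → ℝ) : Prop :=
  x 0 ∈ Ω ∧
  τ 0 = ε / (Lh * σ * cpm * cnp * Real.sqrt n) ∧
  τ 0 * Real.sqrt n ≤ Δ 0 ∧ Δ 0 ≤ Δstar ∧
  (∀ k, A k = fdMatrix F (x k) (τ k)) ∧
  (∀ k,
    -- unsuccessful iteration of type I
    (eta Ω F h p Δstar (x k) (A k) < ε / 2 ∧
      x (k + 1) = x k ∧ Δ (k + 1) = Δ k ∧ τ (k + 1) = τ k / 2) ∨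
    (ε / 2 ≤ eta Ω F h p Δstar (x k) (A k) ∧
      -- the trial step is feasible and achieves a `θ`-fraction of the optimal model decrease
      pNorm p (d k) ≤ Δ k ∧ x k + d k ∈ Ω ∧
      θ * (h (F (x k)) -
          sInf ((fun s => h (F (x k) + (A k).mulVec s)) ''
            {s | x k + s ∈ Ω ∧ pNorm p s ≤ Δ k})) ≤
        h (F (x k)) - h (F (x k) + (A k).mulVec (d k)) ∧
      ρ k = (h (F (x k)) - h (F (x k + d k))) /
            (h (F (x k)) - h (F (x k) + (A k).mulVec (d k))) ∧
      -- successful iteration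
      ((α ≤ ρ k ∧ x (k + 1) = x k + d k ∧ Δ (k + 1) = min (2 * Δ k) Δstar ∧
          τ (k + 1) = τ k) ∨
      -- unsuccessful iteration of type II
       (ρ k < α ∧ τ k * Real.sqrt n ≤ Δ k / 2 ∧
          x (k + 1) = x k ∧ Δ (k + 1) = Δ k / 2 ∧ τ (k + 1) = τ k) ∨
      -- unsuccessful iteration of type III
       (ρ k < α ∧ Δ k / 2 < τ k * Real.sqrt n ∧
          x (k + 1) = x k ∧ Δ (k + 1) = Δ k / 2 ∧ τ (k + 1) = τ k / 2))))

section TRFDaux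
lemma aux_toReal_pos {p : ℝ≥0∞} (hp : 1 ≤ p) (hptop : p ≠ ∞) : 0 < p.toReal :=
  ENNReal.toReal_pos (by intro h; rw [h] at hp; exact absurd hp (by simp)) hptop

lemma pNorm_zero {k : ℕ} {p : ℝ≥0∞} (hp : 1 ≤ p) : pNorm p (0 : Fin k → ℝ) = 0 := by
  unfold pNorm
  split_ifs with hh
  · rcases isEmpty_or_nonempty (Fin k) with he | hne
    · simp [Real.iSup_of_isEmpty]
    · simp
  · have hq := aux_toReal_pos hp hh
    simp [Real.zero_rpow hq.ne', Real.zero_rpow (inv_ne_zero hq.ne')]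

lemma pNorm_smul {k : ℕ} {p : ℝ≥0∞} (hp : 1 ≤ p) {c : ℝ} (hc : 0 ≤ c) (v : Fin k → ℝ) :
    pNorm p (c • v) = c * pNorm p v := by
  unfold pNorm
  split_ifs with hh
  · simp only [Pi.smul_apply, smul_eq_mul, abs_mul, abs_of_nonneg hc]
    rw [show (c * ⨆ i, |v i|) = c • ⨆ i, |v i| from rfl, Real.smul_iSup_of_nonneg hc]
    simp
  · have hq := aux_toReal_pos hp hh
    simp only [Pi.smul_apply, smul_eq_mul, abs_mul, abs_of_nonneg hc]
    have h1 : ∀ i : Fin k, (c * |v i|) ^ p.toReal = c ^ p.toReal * |v i| ^ p.toReal :=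
      fun i => Real.mul_rpow hc (abs_nonneg _)
    simp_rw [h1]
    rw [← Finset.mul_sum, Real.mul_rpow (by positivity)
      (Finset.sum_nonneg fun i _ => by positivity), ← Real.rpow_mul hc,
      mul_one_div_cancel hq.ne', Real.rpow_one]


lemma eucNorm_nonneg {n : ℕ} (v : Fin n → ℝ) : 0 ≤ eucNorm v := Real.sqrt_nonneg _

lemma eucNorm_eq_norm {n : ℕ} (v : Fin n → ℝ) :
    eucNorm v = ‖((WithLp.equiv 2 (Fin n → ℝ)).symm v : EuclideanSpace ℝ (Fin n))‖ := by
  rw [EuclideanSpace.norm_eq]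
  simp [eucNorm, sq_abs]

lemma eucNorm_smul {n : ℕ} (c : ℝ) (v : Fin n → ℝ) :
    eucNorm (c • v) = |c| * eucNorm v := by
  simp only [eucNorm, Pi.smul_apply, smul_eq_mul, mul_pow, ← Finset.mul_sum]
  rw [Real.sqrt_mul (sq_nonneg c), Real.sqrt_sq_eq_abs]

lemma eucNorm_zero {n : ℕ} : eucNorm (0 : Fin n → ℝ) = 0 := by simp [eucNorm]

lemma eucNorm_pos {n : ℕ} {v : Fin n → ℝ} (hv : v ≠ 0) : 0 < eucNorm v := by
  rw [eucNorm_eq_norm]; rw [norm_pos_iff]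
  simpa using fun h => hv (funext fun i => congrFun h i)

def frob {m n : ℕ} (A : Matrix (Fin m) (Fin n) ℝ) : ℝ :=
  Real.sqrt (∑ i, ∑ j, A i j ^ 2)

lemma eucNorm_mulVec_le_frob {m n : ℕ} (A : Matrix (Fin m) (Fin n) ℝ) (v : Fin n → ℝ) :
    eucNorm (A.mulVec v) ≤ frob A * eucNorm v := by
  rw [eucNorm, frob, eucNorm, ← Real.sqrt_mul (by positivity)]
  apply Real.sqrt_le_sqrt
  rw [Finset.sum_mul]
  apply Finset.sum_le_sum
  intro i _
  calc (A.mulVec v i) ^ 2 = (∑ j, A i j * v j) ^ 2 := by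
        simp [Matrix.mulVec, dotProduct]
    _ ≤ (∑ j, A i j ^ 2) * ∑ j, v j ^ 2 := Finset.sum_mul_sq_le_sq_mul_sq _ _ _

lemma bddAbove_opSet {m n : ℕ} (A : Matrix (Fin m) (Fin n) ℝ) :
    BddAbove ((fun v => eucNorm (A.mulVec v)) '' {v | eucNorm v ≤ 1}) := by
  refine ⟨frob A, ?_⟩
  rintro _ ⟨v, hv, rfl⟩
  calc eucNorm (A.mulVec v) ≤ frob A * eucNorm v := eucNorm_mulVec_le_frob A v
    _ ≤ frob A * 1 := by
        have h0 : 0 ≤ frob A := Real.sqrt_nonneg _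
        exact mul_le_mul_of_nonneg_left hv h0
    _ = frob A := mul_one _

lemma opNorm2_nonneg {m n : ℕ} (A : Matrix (Fin m) (Fin n) ℝ) : 0 ≤ opNorm2 A := by
  have h0 : eucNorm (A.mulVec 0) ∈ (fun v => eucNorm (A.mulVec v)) '' {v | eucNorm v ≤ 1} :=
    ⟨0, by simp [eucNorm_zero], rfl⟩
  have := le_csSup (bddAbove_opSet A) h0
  simpa [opNorm2, Matrix.mulVec_zero, eucNorm_zero] using this

lemma eucNorm_mulVec_le {m n : ℕ} (A : Matrix (Fin m) (Fin n) ℝ) (v : Fin n → ℝ) :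
    eucNorm (A.mulVec v) ≤ opNorm2 A * eucNorm v := by
  rcases eq_or_ne v 0 with rfl | hv
  · simp [Matrix.mulVec_zero, eucNorm_zero]
  · have hpos := eucNorm_pos hv
    have h1 : eucNorm ((eucNorm v)⁻¹ • v) = 1 := by
      rw [eucNorm_smul, abs_of_nonneg (by positivity)]
      field_simp
    have hmem : eucNorm (A.mulVec ((eucNorm v)⁻¹ • v))
        ∈ (fun v => eucNorm (A.mulVec v)) '' {v | eucNorm v ≤ 1} :=
      ⟨_, le_of_eq h1, rfl⟩
    have hle := le_csSup (bddAbove_opSet A) hmem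
    rw [Matrix.mulVec_smul, eucNorm_smul, abs_of_nonneg (by positivity)] at hle
    have : (eucNorm v)⁻¹ * eucNorm (A.mulVec v) ≤ opNorm2 A := by
      simpa [opNorm2, Matrix.mulVec_smul] using hle
    calc eucNorm (A.mulVec v) = eucNorm v * ((eucNorm v)⁻¹ * eucNorm (A.mulVec v)) := by
          field_simp
      _ ≤ eucNorm v * opNorm2 A := by
          apply mul_le_mul_of_nonneg_left this (le_of_lt hpos)
      _ = opNorm2 A * eucNorm v := mul_comm _ _


lemma taylor_quadratic {E G : Type*} [NormedAddCommGroup E] [NormedSpace ℝ E]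
    [NormedAddCommGroup G] [NormedSpace ℝ G] [CompleteSpace G]
    (f : E → G) (f' : E → E →L[ℝ] G) (hf : ∀ y, HasFDerivAt f (f' y) y)
    (L : ℝ) (hL : 0 ≤ L) (hLip : ∀ y z, ‖f' y - f' z‖ ≤ L * ‖y - z‖)
    (x d : E) : ‖f (x + d) - f x - f' x d‖ ≤ L / 2 * ‖d‖ ^ 2 := by
  set g : ℝ → G := fun t => f (x + t • d) - t • (f' x d) with hg
  have hgd : ∀ t : ℝ, HasDerivAt g (f' (x + t • d) d - f' x d) t := by
    intro t
    have h1 : HasDerivAt (fun t : ℝ => x + t • d) d t := by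
      simpa using ((hasDerivAt_id t).smul_const d).const_add x
    have h2 : HasDerivAt (fun t : ℝ => f (x + t • d)) (f' (x + t • d) d) t := by
      exact (hf (x + t • d)).comp_hasDerivAt t h1
    have h3 : HasDerivAt (fun t : ℝ => t • (f' x d)) (f' x d) t := by
      simpa using (hasDerivAt_id t).smul_const (f' x d)
    exact h2.sub h3
  have hbound : ∀ t : ℝ, ‖f' (x + t • d) d - f' x d‖ ≤ L * |t| * ‖d‖ ^ 2 := by
    intro t
    have h1 : f' (x + t • d) d - f' x d = (f' (x + t • d) - f' x) d := by simp
    rw [h1]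
    calc ‖(f' (x + t • d) - f' x) d‖ ≤ ‖f' (x + t • d) - f' x‖ * ‖d‖ :=
          ContinuousLinearMap.le_opNorm _ _
      _ ≤ (L * ‖(x + t • d) - x‖) * ‖d‖ := by
          apply mul_le_mul_of_nonneg_right (hLip _ _) (norm_nonneg d)
      _ = L * |t| * ‖d‖ ^ 2 := by
          simp [norm_smul, Real.norm_eq_abs]; ring
  have hcont : Continuous fun t : ℝ => f' (x + t • d) d - f' x d := by
    have : LipschitzWith (Real.toNNReal (L * ‖d‖ ^ 2))
        (fun t : ℝ => f' (x + t • d) d - f' x d) := by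
      apply LipschitzWith.of_dist_le_mul
      intro s t
      rw [dist_eq_norm, Real.dist_eq]
      have h1 : (f' (x + s • d) d - f' x d) - (f' (x + t • d) d - f' x d)
          = (f' (x + s • d) - f' (x + t • d)) d := by simp
      rw [h1]
      calc ‖(f' (x + s • d) - f' (x + t • d)) d‖
          ≤ ‖f' (x + s • d) - f' (x + t • d)‖ * ‖d‖ := ContinuousLinearMap.le_opNorm _ _
        _ ≤ (L * ‖(x + s • d) - (x + t • d)‖) * ‖d‖ :=
            mul_le_mul_of_nonneg_right (hLip _ _) (norm_nonneg d)
        _ = (L * ‖d‖ ^ 2) * |s - t| := by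
            have : (x + s • d) - (x + t • d) = (s - t) • d := by
              rw [sub_smul]; abel
            rw [this, norm_smul, Real.norm_eq_abs]; ring
        _ ≤ ↑(Real.toNNReal (L * ‖d‖ ^ 2)) * |s - t| := by
            apply mul_le_mul_of_nonneg_right (Real.le_coe_toNNReal _) (abs_nonneg _)
    exact this.continuous
  have hint : IntervalIntegrable (fun t : ℝ => f' (x + t • d) d - f' x d)
      MeasureTheory.volume 0 1 := hcont.intervalIntegrable 0 1
  have heq : ∫ t in (0:ℝ)..1, (f' (x + t • d) d - f' x d) = g 1 - g 0 :=
    intervalIntegral.integral_eq_sub_of_hasDerivAt (fun t _ => hgd t) hint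
  have hg10 : g 1 - g 0 = f (x + d) - f x - f' x d := by
    simp only [hg]; simp; abel
  rw [← hg10, ← heq]
  have hb : ‖∫ t in (0:ℝ)..1, (f' (x + t • d) d - f' x d)‖
      ≤ |∫ t in (0:ℝ)..1, L * t * ‖d‖ ^ 2| := by
    apply intervalIntegral.norm_integral_le_abs_of_norm_le
    · filter_upwards [MeasureTheory.ae_restrict_mem measurableSet_Ioc] with t ht
      rw [Set.uIoc_of_le (by norm_num : (0:ℝ) ≤ 1)] at ht
      have h1 : |t| = t := abs_of_nonneg (le_of_lt ht.1)
      calc ‖f' (x + t • d) d - f' x d‖ ≤ L * |t| * ‖d‖ ^ 2 := hbound t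
        _ = L * t * ‖d‖ ^ 2 := by rw [h1]
    · apply Continuous.intervalIntegrable
      continuity
  refine hb.trans ?_
  have hval : ∫ t in (0:ℝ)..1, L * t * ‖d‖ ^ 2 = L / 2 * ‖d‖ ^ 2 := by
    have h1 : (fun t : ℝ => L * t * ‖d‖ ^ 2) = fun t : ℝ => (L * ‖d‖ ^ 2) * t := by
      funext t; ring
    rw [h1, intervalIntegral.integral_const_mul, integral_id]
    ring
  rw [hval, abs_of_nonneg (by positivity)]

lemma taylor_eucNorm {n m : ℕ} (F : (Fin n → ℝ) → (Fin m → ℝ))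
    (J : (Fin n → ℝ) → Matrix (Fin m) (Fin n) ℝ)
    (hJ : ∀ y, HasFDerivAt F (LinearMap.toContinuousLinearMap (Matrix.mulVecLin (J y))) y)
    (LJ : ℝ) (hLJ0 : 0 ≤ LJ)
    (hJLip : ∀ y z, opNorm2 (J y - J z) ≤ LJ * eucNorm (y - z))
    (x d : Fin n → ℝ) :
    eucNorm (F (x + d) - F x - (J x).mulVec d) ≤ LJ / 2 * (eucNorm d) ^ 2 := by
  set en := EuclideanSpace.equiv (Fin n) ℝ with hen
  set em' := EuclideanSpace.equiv (Fin m) ℝ with hem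
  have hennorm : ∀ z : EuclideanSpace ℝ (Fin n), eucNorm (en z) = ‖z‖ := by
    intro z
    rw [eucNorm_eq_norm]
    rfl
  have hemnorm : ∀ v : Fin m → ℝ, ‖em'.symm v‖ = eucNorm v := by
    intro v
    rw [eucNorm_eq_norm]
    rfl
  set f : EuclideanSpace ℝ (Fin n) → EuclideanSpace ℝ (Fin m) :=
    fun z => em'.symm (F (en z)) with hf
  set f' : EuclideanSpace ℝ (Fin n) → EuclideanSpace ℝ (Fin n) →L[ℝ] EuclideanSpace ℝ (Fin m) :=
    fun z => ((em'.symm.toContinuousLinearMap).comp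
      ((LinearMap.toContinuousLinearMap (Matrix.mulVecLin (J (en z)))).comp
        en.toContinuousLinearMap)) with hf'
  have hfd : ∀ z, HasFDerivAt f (f' z) z := by
    intro z
    have h1 : HasFDerivAt (fun w : EuclideanSpace ℝ (Fin n) => F (en w))
        ((LinearMap.toContinuousLinearMap (Matrix.mulVecLin (J (en z)))).comp
          en.toContinuousLinearMap) z :=
      (hJ (en z)).comp z en.toContinuousLinearMap.hasFDerivAt
    exact (em'.symm.toContinuousLinearMap.hasFDerivAt).comp z h1
  have hlip : ∀ z w, ‖f' z - f' w‖ ≤ LJ * ‖z - w‖ := by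
    intro z w
    apply ContinuousLinearMap.opNorm_le_bound _ (by positivity)
    intro v
    have h1 : (f' z - f' w) v = em'.symm ((J (en z) - J (en w)).mulVec (en v)) := by
      simp only [hf', ContinuousLinearMap.sub_apply, ContinuousLinearMap.comp_apply,
        ContinuousLinearEquiv.coe_coe, LinearMap.coe_toContinuousLinearMap',
        Matrix.mulVecLin_apply, Matrix.sub_mulVec]
      rw [← map_sub]
    rw [h1, hemnorm]
    calc eucNorm ((J (en z) - J (en w)).mulVec (en v))
        ≤ opNorm2 (J (en z) - J (en w)) * eucNorm (en v) := eucNorm_mulVec_le _ _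
      _ ≤ (LJ * eucNorm (en z - en w)) * eucNorm (en v) := by
          apply mul_le_mul_of_nonneg_right (hJLip _ _) (by rw [eucNorm_eq_norm]; positivity)
      _ = LJ * ‖z - w‖ * ‖v‖ := by
          rw [← map_sub en z w, hennorm, hennorm]
  have key := taylor_quadratic f f' hfd LJ hLJ0 hlip (en.symm x) (en.symm d)
  have h2 : f (en.symm x + en.symm d) - f (en.symm x) - f' (en.symm x) (en.symm d)
      = em'.symm (F (x + d) - F x - (J x).mulVec d) := by
    simp only [hf, hf', ContinuousLinearMap.comp_apply, ContinuousLinearEquiv.coe_coe,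
      LinearMap.coe_toContinuousLinearMap', Matrix.mulVecLin_apply]
    rw [← map_add en.symm x d]
    simp only [ContinuousLinearEquiv.apply_symm_apply]
    rw [← map_sub, ← map_sub]
  rw [h2, hemnorm] at key
  have h3 : ‖en.symm d‖ = eucNorm d := by
    rw [← hennorm (en.symm d), ContinuousLinearEquiv.apply_symm_apply]
  rw [h3] at key
  exact key

lemma eucNorm_sub_le {n : ℕ} (u v : Fin n → ℝ) :
    eucNorm (u - v) ≤ eucNorm u + eucNorm v := by
  rw [eucNorm_eq_norm, eucNorm_eq_norm, eucNorm_eq_norm]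
  exact norm_sub_le _ _

lemma frob_nonneg {m n : ℕ} (A : Matrix (Fin m) (Fin n) ℝ) : 0 ≤ frob A := Real.sqrt_nonneg _

lemma eucNorm_single {n : ℕ} (j : Fin n) {τ : ℝ} (hτ : 0 ≤ τ) :
    eucNorm (Pi.single j τ) = τ := by
  unfold eucNorm
  have : ∑ i, (Pi.single j τ i) ^ 2 = τ ^ 2 := by
    rw [Finset.sum_eq_single j]
    · simp
    · intro i _ hij; simp [Pi.single_eq_of_ne hij]
    · simp
  rw [this, Real.sqrt_sq hτ]

lemma fd_error {n m : ℕ} (F : (Fin n → ℝ) → (Fin m → ℝ))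
    (J : (Fin n → ℝ) → Matrix (Fin m) (Fin n) ℝ)
    (hJ : ∀ y, HasFDerivAt F (LinearMap.toContinuousLinearMap (Matrix.mulVecLin (J y))) y)
    (LJ : ℝ) (hLJ0 : 0 ≤ LJ)
    (hJLip : ∀ y z, opNorm2 (J y - J z) ≤ LJ * eucNorm (y - z))
    (x : Fin n → ℝ) {τ : ℝ} (hτ : 0 < τ) (v : Fin n → ℝ) :
    eucNorm ((fdMatrix F x τ - J x).mulVec v) ≤ LJ * (Real.sqrt n * τ) / 2 * eucNorm v := by
  refine le_trans (eucNorm_mulVec_le_frob _ _) ?_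
  refine mul_le_mul_of_nonneg_right ?_ (eucNorm_nonneg v)
  have hcol : ∀ j, ∑ i, ((fdMatrix F x τ - J x) i j) ^ 2 ≤ (LJ * τ / 2) ^ 2 := by
    intro j
    have hEq : (fun i => (fdMatrix F x τ - J x) i j)
        = τ⁻¹ • (F (x + Pi.single j τ) - F x - (J x).mulVec (Pi.single j τ)) := by
      funext i
      have hmv : (J x).mulVec (Pi.single j τ) i = J x i j * τ := by
        simp only [Matrix.mulVec, dotProduct, Pi.single_apply, mul_ite, mul_zero]
        rw [Finset.sum_ite_eq' Finset.univ j]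
        simp
      simp only [Matrix.sub_apply, fdMatrix, Matrix.of_apply, Pi.smul_apply, Pi.sub_apply, hmv,
        smul_eq_mul]
      field_simp
    have h1 : ∑ i, ((fdMatrix F x τ - J x) i j) ^ 2
        = (eucNorm (fun i => (fdMatrix F x τ - J x) i j)) ^ 2 := by
      rw [eucNorm, Real.sq_sqrt (by positivity)]
    rw [h1, hEq, eucNorm_smul, abs_of_nonneg (by positivity)]
    have htay := taylor_eucNorm F J hJ LJ hLJ0 hJLip x (Pi.single j τ)
    rw [eucNorm_single j hτ.le] at htay
    have hb : τ⁻¹ * eucNorm (F (x + Pi.single j τ) - F x - (J x).mulVec (Pi.single j τ))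
        ≤ LJ * τ / 2 := by
      rw [inv_mul_le_iff₀ hτ]
      nlinarith [htay]
    have hnn : 0 ≤ τ⁻¹ * eucNorm (F (x + Pi.single j τ) - F x - (J x).mulVec (Pi.single j τ)) :=
      mul_nonneg (by positivity) (eucNorm_nonneg _)
    exact pow_le_pow_left₀ hnn hb 2
  calc frob (fdMatrix F x τ - J x)
      = Real.sqrt (∑ j, ∑ i, ((fdMatrix F x τ - J x) i j) ^ 2) := by
        rw [frob, Finset.sum_comm]
    _ ≤ Real.sqrt (∑ _j : Fin n, (LJ * τ / 2) ^ 2) := by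
        apply Real.sqrt_le_sqrt
        exact Finset.sum_le_sum fun j _ => hcol j
    _ = Real.sqrt ((n : ℝ) * (LJ * τ / 2) ^ 2) := by
        rw [Finset.sum_const, Finset.card_univ, Fintype.card_fin, nsmul_eq_mul]
    _ = Real.sqrt n * (LJ * τ / 2) := by
        rw [Real.sqrt_mul (by positivity), Real.sqrt_sq (by positivity)]
    _ = LJ * (Real.sqrt n * τ) / 2 := by ring

def imgSet {n m : ℕ} (Ω : Set (Fin n → ℝ)) (F : (Fin n → ℝ) → (Fin m → ℝ))
    (h : (Fin m → ℝ) → ℝ) (p : ℝ≥0∞) (x' : Fin n → ℝ) (A' : Matrix (Fin m) (Fin n) ℝ)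
    (r : ℝ) : Set ℝ :=
  (fun s => h (F x' + A'.mulVec s)) '' {s | x' + s ∈ Ω ∧ pNorm p s ≤ r}

lemma imgSet_nonempty {n m : ℕ} {Ω : Set (Fin n → ℝ)} {F : (Fin n → ℝ) → (Fin m → ℝ)}
    {h : (Fin m → ℝ) → ℝ} {p : ℝ≥0∞} (hp : 1 ≤ p) {x' : Fin n → ℝ} (hx : x' ∈ Ω)
    (A' : Matrix (Fin m) (Fin n) ℝ) {r : ℝ} (hr : 0 ≤ r) :
    (imgSet Ω F h p x' A' r).Nonempty :=
  ⟨h (F x' + A'.mulVec 0), ⟨0, ⟨by simpa using hx, by rw [pNorm_zero hp]; exact hr⟩, rfl⟩⟩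

lemma imgSet_bddBelow {n m : ℕ} {Ω : Set (Fin n → ℝ)} {F : (Fin n → ℝ) → (Fin m → ℝ)}
    {h : (Fin m → ℝ) → ℝ} {p : ℝ≥0∞}
    {Lh cpm cnp : ℝ} (hLh : 0 ≤ Lh) (hcpm0 : 0 ≤ cpm) (hcnp0 : 0 ≤ cnp)
    (hhLip : ∀ z w, |h z - h w| ≤ Lh * pNorm p (z - w))
    (hcnp : ∀ v : Fin n → ℝ, eucNorm v ≤ cnp * pNorm p v)
    (hcpm : ∀ z : Fin m → ℝ, pNorm p z ≤ cpm * eucNorm z)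
    (x' : Fin n → ℝ) (A' : Matrix (Fin m) (Fin n) ℝ) {r : ℝ} (hr : 0 ≤ r) :
    BddBelow (imgSet Ω F h p x' A' r) := by
  refine ⟨h (F x') - Lh * (cpm * (frob A' * (cnp * r))), ?_⟩
  rintro _ ⟨s, ⟨hsΩ, hsr⟩, rfl⟩
  have e1 : eucNorm (A'.mulVec s) ≤ frob A' * (cnp * r) :=
    le_trans (eucNorm_mulVec_le_frob _ _)
      (mul_le_mul_of_nonneg_left
        (le_trans (hcnp s) (mul_le_mul_of_nonneg_left hsr hcnp0)) (frob_nonneg _))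
  have e2 : pNorm p ((F x' + A'.mulVec s) - F x') ≤ cpm * (frob A' * (cnp * r)) := by
    rw [add_sub_cancel_left]
    exact le_trans (hcpm _) (mul_le_mul_of_nonneg_left e1 hcpm0)
  have e4 : |h (F x' + A'.mulVec s) - h (F x')| ≤ Lh * (cpm * (frob A' * (cnp * r))) :=
    le_trans (hhLip _ _) (mul_le_mul_of_nonneg_left e2 hLh)
  have e5 := (abs_le.mp e4).1
  simp only [Set.mem_setOf_eq]
  linarith

lemma imgSet_scaling {n m : ℕ} {Ω : Set (Fin n → ℝ)} {F : (Fin n → ℝ) → (Fin m → ℝ)}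
    {h : (Fin m → ℝ) → ℝ} {p : ℝ≥0∞} (hp : 1 ≤ p) (hΩcv : Convex ℝ Ω)
    (hconv : ConvexOn ℝ Set.univ h) {x' : Fin n → ℝ} (hx : x' ∈ Ω)
    (A' : Matrix (Fin m) (Fin n) ℝ) {r R : ℝ} (hr : 0 < r) (hrR : r ≤ R)
    (hbr : BddBelow (imgSet Ω F h p x' A' r))
    (hneR : (imgSet Ω F h p x' A' R).Nonempty) :
    r / R * (h (F x') - sInf (imgSet Ω F h p x' A' R))
      ≤ h (F x') - sInf (imgSet Ω F h p x' A' r) := by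
  have hR : 0 < R := lt_of_lt_of_le hr hrR
  set lam := r / R with hlam
  have hlam0 : 0 < lam := div_pos hr hR
  have hlam1 : lam ≤ 1 := (div_le_one hR).2 hrR
  have hdiv : (sInf (imgSet Ω F h p x' A' r) - (1 - lam) * h (F x')) / lam
      ≤ sInf (imgSet Ω F h p x' A' R) := by
    apply le_csInf hneR
    rintro b ⟨s, ⟨hsΩ, hsR⟩, rfl⟩
    rw [div_le_iff₀ hlam0]
    have hmem : lam • s ∈ {s | x' + s ∈ Ω ∧ pNorm p s ≤ r} := by
      constructor
      · have heq : x' + lam • s = (1 - lam) • x' + lam • (x' + s) := by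
          funext i; simp [Pi.smul_apply]; ring
        rw [heq]
        exact hΩcv hx hsΩ (by linarith) hlam0.le (by ring)
      · rw [pNorm_smul hp hlam0.le]
        calc lam * pNorm p s ≤ lam * R := mul_le_mul_of_nonneg_left hsR hlam0.le
          _ = r := by rw [hlam]; field_simp
    have hle1 : sInf (imgSet Ω F h p x' A' r) ≤ h (F x' + A'.mulVec (lam • s)) :=
      csInf_le hbr ⟨lam • s, hmem, rfl⟩
    have hconvpt : h (F x' + A'.mulVec (lam • s))
        ≤ (1 - lam) * h (F x') + lam * h (F x' + A'.mulVec s) := by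
      have heq : F x' + A'.mulVec (lam • s) = (1 - lam) • (F x') + lam • (F x' + A'.mulVec s) := by
        rw [Matrix.mulVec_smul]; funext i; simp [Pi.smul_apply]; ring
      rw [heq]
      have := hconv.2 (Set.mem_univ (F x')) (Set.mem_univ (F x' + A'.mulVec s))
        (by linarith : (0:ℝ) ≤ 1 - lam) hlam0.le (by ring : (1 - lam) + lam = 1)
      simpa [smul_eq_mul] using this
    linarith
  rw [div_le_iff₀ hlam0] at hdiv
  nlinarith [hdiv]

end TRFDaux
/-- Lemma 3.4: bound on the number of successful iterations. -/
theorem stmt10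
    {n m : ℕ} (hn : 1 ≤ n) (hm : 1 ≤ m) (p : ℝ≥0∞) (hp : 1 ≤ p)
    (Ω : Set (Fin n → ℝ)) (hΩne : Ω.Nonempty) (hΩcl : IsClosed Ω) (hΩcv : Convex ℝ Ω)
    (F : (Fin n → ℝ) → (Fin m → ℝ)) (J : (Fin n → ℝ) → Matrix (Fin m) (Fin n) ℝ)
    (hJ : ∀ y, HasFDerivAt F (LinearMap.toContinuousLinearMap (Matrix.mulVecLin (J y))) y)
    (LJ : ℝ) (hLJ : 0 < LJ)
    (hJLip : ∀ y z, opNorm2 (J y - J z) ≤ LJ * eucNorm (y - z))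
    (h : (Fin m → ℝ) → ℝ) (hconv : ConvexOn ℝ Set.univ h)
    (Lh : ℝ) (hLh : 0 < Lh)
    (hhLip : ∀ z w, |h z - h w| ≤ Lh * pNorm p (z - w))
    (cnp cpm : ℝ) (hcnp1 : 1 ≤ cnp) (hcpm1 : 1 ≤ cpm)
    (hcnp : ∀ v : Fin n → ℝ, eucNorm v ≤ cnp * pNorm p v)
    (hcpm : ∀ z : Fin m → ℝ, pNorm p z ≤ cpm * eucNorm z)
    (ε σ α θ Δstar : ℝ) (hε : 0 < ε) (hσ : 0 < σ)
    (hα0 : 0 < α) (hα1 : α < 1) (hθ0 : 0 < θ) (hθ1 : θ ≤ 1)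
    (x : ℕ → Fin n → ℝ) (τ Δ : ℕ → ℝ) (A : ℕ → Matrix (Fin m) (Fin n) ℝ)
    (d : ℕ → Fin n → ℝ) (ρ : ℕ → ℝ)
    (hrun : TRFDrun Ω F h p Lh cpm cnp ε σ α θ Δstar x τ Δ A d ρ)
    (flow : ℝ) (hflow : ∀ y, flow ≤ h (F y))
    (T : ℕ) (hT1 : 1 ≤ T) (hT : ∀ k < T, ε < psi Ω F h J p Δstar (x k)) :
    (Set.ncard {k : ℕ | k < T ∧ ε / 2 ≤ eta Ω F h p Δstar (x k) (A k) ∧ α ≤ ρ k} : ℝ) ≤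
      8 * Lh * max σ LJ * cpm * cnp ^ 2 * (h (F (x 0)) - flow) /
        (α * (1 - α) * θ ^ 2) / ε ^ 2 := by

  classical
  obtain ⟨hx0, hτ00, hΔ00, hΔ0star, hA, hstep⟩ := hrun
  have hsn1 : (1:ℝ) ≤ Real.sqrt n := by
    rw [show (1:ℝ) = Real.sqrt 1 by simp]
    exact Real.sqrt_le_sqrt (by exact_mod_cast hn)
  have hsn : (0:ℝ) < Real.sqrt n := lt_of_lt_of_le one_pos hsn1
  have hcnp0 : (0:ℝ) < cnp := lt_of_lt_of_le one_pos hcnp1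
  have hcpm0 : (0:ℝ) < cpm := lt_of_lt_of_le one_pos hcpm1
  set M := max σ LJ with hM
  have hM0 : 0 < M := lt_of_lt_of_le hσ (le_max_left _ _)
  have hLJM : LJ ≤ M := le_max_right _ _
  have hσM : σ ≤ M := le_max_left _ _
  have h1α : (0:ℝ) < 1 - α := by linarith
  have hτ0pos : 0 < τ 0 := by
    rw [hτ00]
    exact div_pos hε (mul_pos (mul_pos (mul_pos (mul_pos hLh hσ) hcpm0) hcnp0) hsn)
  have hτpos : ∀ k, 0 < τ k := by
    intro k; induction k with
    | zero => exact hτ0pos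
    | succ k ih =>
      rcases hstep k with ⟨_, _, _, hτ'⟩ | ⟨_, _, _, _, _, hsub⟩
      · rw [hτ']; linarith
      · rcases hsub with ⟨_, _, _, hτ'⟩ | ⟨_, _, _, _, hτ'⟩ | ⟨_, _, _, _, hτ'⟩ <;>
          rw [hτ'] <;> linarith
  have hΔ0pos : 0 < Δ 0 := lt_of_lt_of_le (mul_pos hτ0pos hsn) hΔ00
  have hΔstarpos : 0 < Δstar := lt_of_lt_of_le hΔ0pos hΔ0star
  set Δmin := (1 - α) * θ * ε / (4 * Lh * M * cpm * cnp ^ 2) with hΔmin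
  have hden : (0:ℝ) < 4 * Lh * M * cpm * cnp ^ 2 := by positivity
  have hΔminpos : 0 < Δmin := div_pos (mul_pos (mul_pos h1α hθ0) hε) hden
  have hbdd : ∀ (x' : Fin n → ℝ) (A' : Matrix (Fin m) (Fin n) ℝ) {r : ℝ}, 0 ≤ r →
      BddBelow (imgSet Ω F h p x' A' r) :=
    fun x' A' _ hr => imgSet_bddBelow hLh.le hcpm0.le hcnp0.le hhLip hcnp hcpm x' A' hr
  have hne : ∀ {x' : Fin n → ℝ}, x' ∈ Ω → ∀ (A' : Matrix (Fin m) (Fin n) ℝ) {r : ℝ}, 0 ≤ r →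
      (imgSet Ω F h p x' A' r).Nonempty :=
    fun hx A' _ hr => imgSet_nonempty hp hx A' hr
  have predlb : ∀ k, x k ∈ Ω → 0 < Δ k → Δ k ≤ Δstar →
      ε / 2 ≤ eta Ω F h p Δstar (x k) (A k) →
      θ * (h (F (x k)) - sInf (imgSet Ω F h p (x k) (A k) (Δ k)))
        ≤ h (F (x k)) - h (F (x k) + (A k).mulVec (d k)) →
      θ * (ε / 2 * Δ k) ≤ h (F (x k)) - h (F (x k) + (A k).mulVec (d k)) := by
    intro k hxk hΔpos hΔle hη hθf
    have hsc := imgSet_scaling hp hΩcv hconv hxk (A k) hΔpos hΔle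
      (hbdd (x k) (A k) hΔpos.le) (hne hxk (A k) (le_trans hΔpos.le hΔle))
    have hηq : ε / 2 * Δstar ≤ h (F (x k)) - sInf (imgSet Ω F h p (x k) (A k) Δstar) := by
      have h1 : eta Ω F h p Δstar (x k) (A k)
          = Δstar⁻¹ * (h (F (x k)) - sInf (imgSet Ω F h p (x k) (A k) Δstar)) := rfl
      rw [h1, inv_mul_eq_div] at hη
      exact (le_div_iff₀ hΔstarpos).1 hη
    have h2 : ε / 2 * Δ k ≤ h (F (x k)) - sInf (imgSet Ω F h p (x k) (A k) (Δ k)) := by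
      have h3 := mul_le_mul_of_nonneg_left hηq
        (le_of_lt (div_pos hΔpos hΔstarpos) : (0:ℝ) ≤ Δ k / Δstar)
      have h4 : Δ k / Δstar * (ε / 2 * Δstar) = ε / 2 * Δ k := by
        field_simp
      linarith
    have h5 := mul_le_mul_of_nonneg_left h2 hθ0.le
    linarith
  have key : ∀ k, x k ∈ Ω → τ k * Real.sqrt n ≤ Δ k → Δ k ≤ Δstar →
      ε / 2 ≤ eta Ω F h p Δstar (x k) (A k) →
      pNorm p (d k) ≤ Δ k →
      θ * (h (F (x k)) - sInf (imgSet Ω F h p (x k) (A k) (Δ k)))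
        ≤ h (F (x k)) - h (F (x k) + (A k).mulVec (d k)) →
      ρ k = (h (F (x k)) - h (F (x k + d k))) /
        (h (F (x k)) - h (F (x k) + (A k).mulVec (d k))) →
      ρ k < α → 2 * Δmin < Δ k := by
    intro k hxk hτΔ hΔle hη hdp hθf hρf hρα
    have hΔpos : 0 < Δ k := lt_of_lt_of_le (mul_pos (hτpos k) hsn) hτΔ
    have hpred := predlb k hxk hΔpos hΔle hη hθf
    have hpredpos : 0 < h (F (x k)) - h (F (x k) + (A k).mulVec (d k)) :=
      lt_of_lt_of_le (mul_pos hθ0 (mul_pos (half_pos hε) hΔpos)) hpred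
    have hdeuc : eucNorm (d k) ≤ cnp * Δ k :=
      le_trans (hcnp (d k)) (mul_le_mul_of_nonneg_left hdp hcnp0.le)
    have hveq : F (x k + d k) - (F (x k) + (A k).mulVec (d k))
        = (F (x k + d k) - F (x k) - (J (x k)).mulVec (d k))
          - ((A k - J (x k)).mulVec (d k)) := by
      rw [Matrix.sub_mulVec]; funext i; simp; ring
    have htay := taylor_eucNorm F J hJ LJ hLJ.le hJLip (x k) (d k)
    have hfd := fd_error F J hJ LJ hLJ.le hJLip (x k) (hτpos k) (d k)
    rw [← hA k] at hfd
    have hEbound : eucNorm (F (x k + d k) - (F (x k) + (A k).mulVec (d k)))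
        ≤ LJ * cnp ^ 2 * Δ k ^ 2 := by
      rw [hveq]
      refine le_trans (eucNorm_sub_le _ _) ?_
      have h5 : LJ * (Real.sqrt n * τ k) / 2 * eucNorm (d k) ≤ LJ * Δ k / 2 * (cnp * Δ k) := by
        have hsτ : Real.sqrt n * τ k ≤ Δ k := by rw [mul_comm]; exact hτΔ
        have h5' : Real.sqrt n * τ k * eucNorm (d k) ≤ Δ k * (cnp * Δ k) :=
          mul_le_mul hsτ hdeuc (eucNorm_nonneg _) hΔpos.le
        nlinarith [h5', hLJ.le]
      have h6 : LJ / 2 * (eucNorm (d k)) ^ 2 ≤ LJ / 2 * (cnp * Δ k) ^ 2 :=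
        mul_le_mul_of_nonneg_left (pow_le_pow_left₀ (eucNorm_nonneg (d k)) hdeuc 2)
          (by positivity : (0:ℝ) ≤ LJ / 2)
      have hb2 : cnp ≤ cnp ^ 2 := by nlinarith
      have h7 : LJ * Δ k / 2 * (cnp * Δ k) ≤ LJ / 2 * (cnp ^ 2 * Δ k ^ 2) := by
        nlinarith [mul_nonneg (mul_nonneg hLJ.le (sq_nonneg (Δ k))) (sub_nonneg.2 hb2)]
      linarith [htay, hfd, h5, h6, h7]
    have hN : h (F (x k + d k)) - h (F (x k) + (A k).mulVec (d k))
        ≤ Lh * (cpm * (LJ * cnp ^ 2 * Δ k ^ 2)) := by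
      have e2 : pNorm p (F (x k + d k) - (F (x k) + (A k).mulVec (d k)))
          ≤ cpm * (LJ * cnp ^ 2 * Δ k ^ 2) :=
        le_trans (hcpm _) (mul_le_mul_of_nonneg_left hEbound hcpm0.le)
      have e4 := le_trans (hhLip (F (x k + d k)) (F (x k) + (A k).mulVec (d k)))
        (mul_le_mul_of_nonneg_left e2 hLh.le)
      exact le_trans (le_abs_self _) e4
    have hρval : (1 - ρ k) * (h (F (x k)) - h (F (x k) + (A k).mulVec (d k)))
        = h (F (x k + d k)) - h (F (x k) + (A k).mulVec (d k)) := by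
      rw [hρf]; field_simp; ring
    have hstep1 : (1 - α) * (θ * (ε / 2 * Δ k)) < Lh * (cpm * (LJ * cnp ^ 2 * Δ k ^ 2)) := by
      calc (1 - α) * (θ * (ε / 2 * Δ k))
          ≤ (1 - α) * (h (F (x k)) - h (F (x k) + (A k).mulVec (d k))) :=
            mul_le_mul_of_nonneg_left hpred h1α.le
        _ < (1 - ρ k) * (h (F (x k)) - h (F (x k) + (A k).mulVec (d k))) :=
            mul_lt_mul_of_pos_right (by linarith) hpredpos
        _ = h (F (x k + d k)) - h (F (x k) + (A k).mulVec (d k)) := hρval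
        _ ≤ Lh * (cpm * (LJ * cnp ^ 2 * Δ k ^ 2)) := hN
    have h8 : (1 - α) * (θ * (ε / 2)) < Lh * cpm * LJ * cnp ^ 2 * Δ k := by
      apply lt_of_mul_lt_mul_right ?_ hΔpos.le
      nlinarith [hstep1]
    have h9 : Lh * cpm * LJ * cnp ^ 2 * Δ k ≤ Lh * cpm * M * cnp ^ 2 * Δ k := by
      nlinarith [mul_nonneg (mul_nonneg (mul_nonneg (mul_nonneg hLh.le hcpm0.le)
        (sub_nonneg.2 hLJM)) (sq_nonneg cnp)) hΔpos.le]
    rw [hΔmin, show 2 * ((1 - α) * θ * ε / (4 * Lh * M * cpm * cnp ^ 2))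
      = (1 - α) * θ * ε / (2 * Lh * M * cpm * cnp ^ 2) by ring]
    rw [div_lt_iff₀ (by positivity)]
    nlinarith [h8, h9]
  have hInv : ∀ k, x k ∈ Ω ∧ τ k * Real.sqrt n ≤ Δ k ∧ Δ k ≤ Δstar ∧ Δmin ≤ Δ k := by
    intro k; induction k with
    | zero =>
      refine ⟨hx0, hΔ00, hΔ0star, ?_⟩
      have h1 : τ 0 * Real.sqrt n = ε / (Lh * σ * cpm * cnp) := by
        rw [hτ00]; field_simp
      have h2 : Δmin ≤ ε / (Lh * σ * cpm * cnp) := by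
        rw [hΔmin, div_le_div_iff₀ hden (by positivity)]
        have hb1 : (1 - α) * θ ≤ 1 := by nlinarith
        have hb2 : cnp ≤ cnp ^ 2 := by nlinarith
        nlinarith [mul_pos (mul_pos (mul_pos hLh hσ) hcpm0) hcnp0,
          mul_pos (mul_pos (mul_pos hLh hM0) hcpm0) (mul_pos hcnp0 hcnp0),
          mul_le_mul_of_nonneg_left hσM (le_of_lt (mul_pos hLh hcpm0)),
          mul_nonneg (mul_nonneg (mul_nonneg hLh.le hcpm0.le) hcnp0.le) hε.le,
          mul_le_mul_of_nonneg_left hb2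
            (le_of_lt (mul_pos (mul_pos (mul_pos hε hLh) hM0) hcpm0)),
          mul_le_mul_of_nonneg_right hb1
            (le_of_lt (mul_pos (mul_pos (mul_pos (mul_pos hε hLh) hσ) hcpm0) hcnp0))]
      linarith [h1 ▸ hΔ00]
    | succ k ih =>
      obtain ⟨hxk, hτΔ, hΔs, hΔm⟩ := ih
      have hΔpos : 0 < Δ k := lt_of_lt_of_le (mul_pos (hτpos k) hsn) hτΔ
      rcases hstep k with ⟨_, hx', hΔ', hτ'⟩ | ⟨hη, hd1, hd2, hθf, hρf, hsub⟩
      · refine ⟨by rw [hx']; exact hxk, ?_, by rw [hΔ']; exact hΔs, by rw [hΔ']; exact hΔm⟩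
        rw [hτ', hΔ']
        nlinarith [mul_pos (hτpos k) hsn]
      · rcases hsub with ⟨hρα, hx', hΔ', hτ'⟩ | ⟨hρα, hτΔ2, hx', hΔ', hτ'⟩ |
          ⟨hρα, hτΔ2, hx', hΔ', hτ'⟩
        · have hΔge : Δ k ≤ Δ (k+1) := by rw [hΔ']; exact le_min (by linarith) hΔs
          refine ⟨by rw [hx']; exact hd2, ?_, by rw [hΔ']; exact min_le_right _ _, by linarith⟩
          rw [hτ']; linarith
        · have hkk := key k hxk hτΔ hΔs hη hd1 hθf hρf hρα
          exact ⟨by rw [hx']; exact hxk, by rw [hτ', hΔ']; linarith,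
            by rw [hΔ']; linarith, by rw [hΔ']; linarith⟩
        · have hkk := key k hxk hτΔ hΔs hη hd1 hθf hρf hρα
          refine ⟨by rw [hx']; exact hxk, ?_, by rw [hΔ']; linarith, by rw [hΔ']; linarith⟩
          rw [hτ', hΔ']
          nlinarith [hτΔ]
  have hsucc : ∀ k, ε / 2 ≤ eta Ω F h p Δstar (x k) (A k) → α ≤ ρ k →
      α * (θ * (ε / 2 * Δmin)) ≤ h (F (x k)) - h (F (x (k+1))) := by
    intro k hη hαρ
    obtain ⟨hxk, hτΔ, hΔs, hΔm⟩ := hInv k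
    have hΔpos : 0 < Δ k := lt_of_lt_of_le (mul_pos (hτpos k) hsn) hτΔ
    rcases hstep k with ⟨hlt, _, _, _⟩ | ⟨_, hd1, hd2, hθf, hρf, hsub⟩
    · linarith
    rcases hsub with ⟨_, hx', _, _⟩ | ⟨hlt, _, _, _, _⟩ | ⟨hlt, _, _, _, _⟩
    · have hpred := predlb k hxk hΔpos hΔs hη hθf
      have hpredpos : 0 < h (F (x k)) - h (F (x k) + (A k).mulVec (d k)) :=
        lt_of_lt_of_le (mul_pos hθ0 (mul_pos (half_pos hε) hΔpos)) hpred
      have hdec : α * (h (F (x k)) - h (F (x k) + (A k).mulVec (d k)))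
          ≤ h (F (x k)) - h (F (x k + d k)) := by
        rw [hρf] at hαρ
        exact (le_div_iff₀ hpredpos).1 hαρ
      rw [hx']
      have hm1 : α * (θ * (ε / 2 * Δmin)) ≤ α * (θ * (ε / 2 * Δ k)) := by
        have := mul_le_mul_of_nonneg_left
          (mul_le_mul_of_nonneg_left
            (mul_le_mul_of_nonneg_left hΔm (by linarith : (0:ℝ) ≤ ε / 2)) hθ0.le) hα0.le
        linarith
      have hm2 : α * (θ * (ε / 2 * Δ k))
          ≤ α * (h (F (x k)) - h (F (x k) + (A k).mulVec (d k))) :=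
        mul_le_mul_of_nonneg_left hpred hα0.le
      linarith
    · linarith
    · linarith
  have hmono : ∀ k, h (F (x (k+1))) ≤ h (F (x k)) := by
    intro k
    rcases hstep k with ⟨_, hx', _, _⟩ | ⟨hη, hd1, hd2, hθf, hρf, hsub⟩
    · exact le_of_eq (by rw [hx'])
    rcases hsub with ⟨hαρ, _, _, _⟩ | ⟨_, _, hx', _, _⟩ | ⟨_, _, hx', _, _⟩
    · have h1 := hsucc k hη hαρ
      have h2 : 0 < α * (θ * (ε / 2 * Δmin)) :=
        mul_pos hα0 (mul_pos hθ0 (mul_pos (half_pos hε) hΔminpos))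
      linarith
    · exact le_of_eq (by rw [hx'])
    · exact le_of_eq (by rw [hx'])
  set s : Finset ℕ := (Finset.range T).filter
      (fun k => ε / 2 ≤ eta Ω F h p Δstar (x k) (A k) ∧ α ≤ ρ k) with hs
  have hsetEq : {k : ℕ | k < T ∧ ε / 2 ≤ eta Ω F h p Δstar (x k) (A k) ∧ α ≤ ρ k} = ↑s := by
    ext k
    simp [hs, Finset.mem_filter, Finset.mem_range]
  have hcard : ({k : ℕ | k < T ∧ ε / 2 ≤ eta Ω F h p Δstar (x k) (A k) ∧ α ≤ ρ k}).ncard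
      = s.card := by
    rw [hsetEq, Set.ncard_coe_finset]
  set c : ℝ := α * (θ * (ε / 2 * Δmin)) with hc
  have hcpos : 0 < c := mul_pos hα0 (mul_pos hθ0 (mul_pos (half_pos hε) hΔminpos))
  have hsum1 : (s.card : ℝ) * c ≤ ∑ k ∈ s, (h (F (x k)) - h (F (x (k+1)))) := by
    rw [← nsmul_eq_mul]
    apply Finset.card_nsmul_le_sum
    intro k hk
    rw [hs, Finset.mem_filter] at hk
    exact hsucc k hk.2.1 hk.2.2
  have hsum2 : ∑ k ∈ s, (h (F (x k)) - h (F (x (k+1))))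
      ≤ ∑ k ∈ Finset.range T, (h (F (x k)) - h (F (x (k+1)))) := by
    apply Finset.sum_le_sum_of_subset_of_nonneg
    · rw [hs]; exact Finset.filter_subset _ _
    · intro k _ _
      linarith [hmono k]
  have hsum3 : ∑ k ∈ Finset.range T, (h (F (x k)) - h (F (x (k+1))))
      = h (F (x 0)) - h (F (x T)) := Finset.sum_range_sub' (fun k => h (F (x k))) T
  have htot : (s.card : ℝ) * c ≤ h (F (x 0)) - flow := by
    have := hflow (x T)
    linarith
  rw [hcard]
  have hfinal : (s.card : ℝ) ≤ (h (F (x 0)) - flow) / c := (le_div_iff₀ hcpos).2 htot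
  refine le_trans hfinal (le_of_eq ?_)
  rw [hc, hΔmin]
  field_simp
  ring
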